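/- Let α be an irrational number and suppose f ∈ L¹(𝕋) is mean-zero with |f̂(n)| ≥ (log n)/n for all n ≥ 2. Then f is not a τ_α-coboundary with transfer function in L¹(𝕋), where τ_α is rotation by α. -/

import Mathlib

open MeasureTheory ENNReal Complex AddCircle

-- translation lemma
lemma coeff_translate (a : ℝ) (h : AddCircle (1:ℝ) → ℂ) (n : ℤ) :
    fourierCoeff (fun x => h ((a : AddCircle (1:ℝ)) + x)) n
      = fourier n ((a : AddCircle (1:ℝ))) * fourierCoeff h n := by
  have key : ∀ x : AddCircle (1:ℝ), (fourier (-n) x : ℂ) • h ((a : AddCircle (1:ℝ)) + x)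
      = (fourier n ((a:AddCircle (1:ℝ))) : ℂ) *
        ((fourier (-n) ((a:AddCircle (1:ℝ)) + x) : ℂ) • h ((a:AddCircle (1:ℝ)) + x)) := by
    intro x
    have h1 : (fourier (-n) ((a:AddCircle (1:ℝ)) + x) : ℂ)
        = fourier (-n) (a:AddCircle (1:ℝ)) * fourier (-n) x := by
      simp [fourier_apply, smul_add, toCircle_add]
    have h2 : (fourier n (a:AddCircle (1:ℝ)) : ℂ) * fourier (-n) (a:AddCircle (1:ℝ)) = 1 := by
      rw [← fourier_add]; simp [fourier_zero]
    rw [h1, smul_eq_mul, smul_eq_mul]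
    calc (fourier (-n) x : ℂ) * h ((a:AddCircle (1:ℝ)) + x)
        = ((fourier n (a:AddCircle (1:ℝ)) : ℂ) * fourier (-n) (a:AddCircle (1:ℝ))) *
          ((fourier (-n) x : ℂ) * h ((a:AddCircle (1:ℝ)) + x)) := by rw [h2, one_mul]
      _ = _ := by ring
  rw [fourierCoeff]
  simp_rw [key]
  rw [integral_const_mul]
  congr 1
  exact integral_add_left_eq_self (fun y => (fourier (-n) y : ℂ) • h y) (a : AddCircle (1:ℝ))

-- norm bound
lemma coeff_norm_le (h : AddCircle (1:ℝ) → ℂ) (n : ℤ) :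
    ‖fourierCoeff h n‖ ≤ ∫ x, ‖h x‖ ∂haarAddCircle := by
  rw [fourierCoeff]
  calc ‖∫ t, (fourier (-n) t : ℂ) • h t ∂haarAddCircle‖
      ≤ ∫ t, ‖(fourier (-n) t : ℂ) • h t‖ ∂haarAddCircle := norm_integral_le_integral_norm _
    _ = ∫ x, ‖h x‖ ∂haarAddCircle := by
        congr 1; funext t
        rw [smul_eq_mul, norm_mul]
        simp [Circle.norm_coe]

lemma exists_large_den {α : ℝ} (hα : Irrational α) (N : ℕ) :
    ∃ q : ℚ, |α - q| < 1 / (q.den : ℝ)^2 ∧ N ≤ q.den := by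
  by_contra hcon
  push_neg at hcon
  have hinf := Real.infinite_rat_abs_sub_lt_one_div_den_sq_of_irrational hα
  apply hinf
  have hsub : {q : ℚ | |α - q| < 1 / (q.den : ℝ)^2} ⊆
      (fun p : ℤ × ℕ => ((p.1 : ℚ) / (p.2 : ℚ))) ''
        ((Set.Icc (-((⌈|α|⌉ + 1) * N)) ((⌈|α|⌉ + 1) * N)) ×ˢ (Set.Iic N)) := by
    intro q hq
    have hq' : |α - (q:ℝ)| < 1 / (q.den : ℝ)^2 := hq
    refine ⟨(q.num, q.den), ⟨?_, le_of_lt (hcon q hq')⟩, by simp [Rat.num_div_den]⟩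
    have hden1 : (1:ℝ) ≤ q.den := by exact_mod_cast q.pos
    have hd2 : 1 / (q.den : ℝ)^2 ≤ 1 := by
      rw [div_le_one (by positivity)]
      nlinarith
    have habs : |(q:ℝ)| ≤ |α| + 1 := by
      have h5 := abs_sub_abs_le_abs_sub (q:ℝ) α
      rw [abs_sub_comm] at h5
      linarith [hq'.le.trans hd2]
    have hnum : |(q.num : ℝ)| ≤ (|α| + 1) * q.den := by
      have : (q:ℝ) = (q.num : ℝ) / q.den := by
        push_cast [Rat.cast_def]; rfl
      rw [this, abs_div, abs_of_pos (by exact_mod_cast q.pos : (0:ℝ) < q.den),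
        div_le_iff₀ (by exact_mod_cast q.pos)] at habs
      exact habs
    have hden : (q.den : ℝ) ≤ N := by
      exact_mod_cast (hcon q hq').le
    have hub : |(q.num : ℝ)| ≤ (⌈|α|⌉ + 1) * N := by
      calc |(q.num : ℝ)| ≤ (|α| + 1) * q.den := hnum
        _ ≤ ((⌈|α|⌉:ℝ) + 1) * N := by
            apply mul_le_mul _ hden (by positivity) (by positivity)
            linarith [Int.le_ceil |α|]
    have := abs_le.mp hub
    constructor
    · exact_mod_cast this.1
    · exact_mod_cast this.2
  exact Set.Finite.subset (Set.Finite.image _ ((Set.finite_Icc _ _).prod (Set.finite_Iic _))) hsub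

theorem stmt9 (α : ℝ) (hα : Irrational α)
    (f : AddCircle (1 : ℝ) → ℂ)
    (hf1 : Integrable f AddCircle.haarAddCircle)
    (hmean : ∫ x, f x ∂AddCircle.haarAddCircle = 0)
    (hbig : ∀ n : ℕ, 2 ≤ n → Real.log n / n ≤ ‖fourierCoeff f (n : ℤ)‖) :
    ¬ ∃ h : AddCircle (1 : ℝ) → ℂ, Integrable h AddCircle.haarAddCircle ∧
      ∀ᵐ x ∂AddCircle.haarAddCircle,
        f x = h x - h ((α : AddCircle (1 : ℝ)) + x) := by
  rintro ⟨h, hh, hae⟩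
  set μ : Measure (AddCircle (1:ℝ)) := AddCircle.haarAddCircle
  set C := ∫ x, ‖h x‖ ∂μ with hC
  have hC0 : 0 ≤ C := integral_nonneg (fun x => norm_nonneg _)
  -- coefficient identity
  have hcoeff : ∀ n : ℤ, fourierCoeff f n
      = (1 - (fourier n ((α : AddCircle (1:ℝ))) : ℂ)) * fourierCoeff h n := by
    intro n
    have h1 : fourierCoeff f n = fourierCoeff h n -
        fourierCoeff (fun x => h ((α : AddCircle (1:ℝ)) + x)) n := by
      have hint1 : Integrable (fun t => (fourier (-n) t : ℂ) • h t) μ := by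
        apply Integrable.bdd_mul (c := 1) hh (Continuous.aestronglyMeasurable (by continuity)) (Filter.Eventually.of_forall fun t => ?_)
        simp [Circle.norm_coe]
      have hh2 : Integrable (fun x => h ((α : AddCircle (1:ℝ)) + x)) μ :=
        hh.comp_add_left _
      have hint2 : Integrable (fun t => (fourier (-n) t : ℂ) • h ((α : AddCircle (1:ℝ)) + t)) μ := by
        apply Integrable.bdd_mul (c := 1) hh2 (Continuous.aestronglyMeasurable (by continuity)) (Filter.Eventually.of_forall fun t => ?_)
        simp [Circle.norm_coe]
      rw [fourierCoeff, fourierCoeff, fourierCoeff, ← integral_sub hint1 hint2]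
      apply integral_congr_ae
      filter_upwards [hae] with x hx
      rw [hx]; simp only [smul_eq_mul]; ring
    rw [h1, coeff_translate, sub_mul, one_mul]
  -- pick a large denominator
  set N : ℕ := max 7 ⌈Real.exp (4 * Real.pi * C + 1)⌉₊ with hN
  obtain ⟨q, hq1, hq2⟩ := exists_large_den hα N
  set n : ℕ := q.den with hn
  have hn7 : 7 ≤ n := le_trans (le_max_left _ _) hq2
  have hn2 : 2 ≤ n := by omega
  have hn0 : (0:ℝ) < n := by positivity
  -- the bound on |1 - fourier n α|
  have hfour : ‖1 - (fourier (n:ℤ) ((α : AddCircle (1:ℝ))) : ℂ)‖ ≤ 4 * Real.pi / n := by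
    have hval : (fourier (n:ℤ) ((α : AddCircle (1:ℝ))) : ℂ)
        = Complex.exp (2 * Real.pi * Complex.I * n * α) := by
      rw [fourier_coe_apply]; norm_num
    set δ : ℝ := (n:ℝ) * α - q.num with hδdef
    have hexp : Complex.exp (2 * Real.pi * Complex.I * n * α)
        = Complex.exp (2 * Real.pi * Complex.I * (δ : ℝ)) := by
      have hsplit : (2 * Real.pi * Complex.I * n * α : ℂ)
          = 2 * Real.pi * Complex.I * ((δ : ℝ) : ℂ)
            + (q.num : ℤ) * (2 * Real.pi * Complex.I) := by
        rw [hδdef]; push_cast; ring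
      rw [hsplit, Complex.exp_add, Complex.exp_int_mul_two_pi_mul_I, mul_one]
    have hδ : |(n:ℝ) * α - q.num| < 1 / n := by
      have hqval : (q : ℝ) = (q.num : ℝ) / n := by
        rw [hn]; push_cast [Rat.cast_def]; rfl
      have : |α - (q:ℝ)| < 1 / (n:ℝ)^2 := hq1
      rw [hqval] at this
      have h3 : (n:ℝ) * α - q.num = n * (α - (q.num:ℝ)/n) := by
        field_simp
      rw [h3, abs_mul, abs_of_pos hn0]
      calc (n:ℝ) * |α - (q.num:ℝ)/n| < n * (1 / (n:ℝ)^2) := by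
            apply mul_lt_mul_of_pos_left this hn0
        _ = 1 / n := by field_simp
    rw [hval, hexp]
    have hz : ‖2 * Real.pi * Complex.I * (δ:ℝ)‖ = 2 * Real.pi * |δ| := by
      simp [abs_of_pos Real.pi_pos, mul_comm, mul_assoc]
    have hzle : ‖2 * Real.pi * Complex.I * (δ:ℝ)‖ ≤ 1 := by
      rw [hz]
      have h1n : (1:ℝ)/n ≤ 1/7 := by
        apply div_le_div_of_nonneg_left one_pos.le (by norm_num)
        exact_mod_cast hn7
      have habs7 : |δ| ≤ 1/7 := le_trans hδ.le h1n
      nlinarith [Real.pi_pos, Real.pi_lt_d2, abs_nonneg δ]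
    have := Complex.norm_exp_sub_one_le (x := 2 * Real.pi * Complex.I * (δ:ℝ)) hzle
    calc ‖1 - Complex.exp (2 * Real.pi * Complex.I * (δ:ℝ))‖
        = ‖Complex.exp (2 * Real.pi * Complex.I * (δ:ℝ)) - 1‖ := by
          rw [← norm_neg]; ring_nf
      _ ≤ 2 * ‖2 * Real.pi * Complex.I * (δ:ℝ)‖ := this
      _ = 4 * Real.pi * |δ| := by rw [hz]; ring
      _ ≤ 4 * Real.pi * (1/n) := by
          apply mul_le_mul_of_nonneg_left hδ.le (by positivity)
      _ = 4 * Real.pi / n := by ring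
  -- combine
  have hcb : ‖fourierCoeff f (n:ℤ)‖ ≤ (4 * Real.pi / n) * C := by
    rw [hcoeff]
    rw [norm_mul]
    apply mul_le_mul hfour (coeff_norm_le h _) (norm_nonneg _) (by positivity)
  have hlow := hbig n hn2
  have hlogle : Real.log n ≤ 4 * Real.pi * C := by
    have := le_trans hlow hcb
    rw [div_le_iff₀ hn0] at this
    calc Real.log n = Real.log n / n * n := by field_simp
      _ ≤ 4 * Real.pi / n * C * n := by
          apply mul_le_mul_of_nonneg_right (le_trans hlow hcb) hn0.le
      _ = 4 * Real.pi * C := by field_simp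
  -- but log n > 4πC
  have hexpN : Real.exp (4 * Real.pi * C + 1) ≤ n := by
    calc Real.exp (4 * Real.pi * C + 1) ≤ (⌈Real.exp (4 * Real.pi * C + 1)⌉₊ : ℝ) :=
          Nat.le_ceil _
      _ ≤ (N : ℝ) := by exact_mod_cast le_max_right 7 _
      _ ≤ (n : ℝ) := by exact_mod_cast hq2
  have : 4 * Real.pi * C + 1 ≤ Real.log n := by
    rw [← Real.log_exp (4 * Real.pi * C + 1)]
    exact Real.log_le_log (Real.exp_pos _) hexpN
  linarith
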